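/- A symmetric real n×n matrix with nonpositive off-diagonal entries that is positive semidefinite is supersingular (annihilates some vector with no zero entry) if and only if it annihilates a vector all of whose entries are strictly positive. -/

import Mathlib

theorem stmt_5 (n : ℕ) (H : Matrix (Fin n) (Fin n) ℝ) (hsymm : H.IsSymm)
    (hoff : ∀ v v', v ≠ v' → H v v' ≤ 0)
    (hpsd : ∀ x : Fin n → ℝ, 0 ≤ ∑ v, ∑ v', x v * H v v' * x v') :
    (∃ l : Fin n → ℝ, H.mulVec l = 0 ∧ ∀ v, l v ≠ 0) ↔
    (∃ l : Fin n → ℝ, H.mulVec l = 0 ∧ ∀ v, 0 < l v) := by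
  have hquad : ∀ x : Fin n → ℝ, dotProduct x (H.mulVec x) = ∑ v, ∑ v', x v * H v v' * x v' := by
    intro x
    simp [dotProduct, Matrix.mulVec, Finset.mul_sum, mul_assoc]
  have hPSD : H.PosSemidef := by
    constructor
    · rw [Matrix.IsHermitian, Matrix.conjTranspose]
      ext i j
      simpa using hsymm.apply i j
    · intro x
      simpa [Finsupp.sum_fintype] using hpsd x
  constructor
  · rintro ⟨l, hl, hnz⟩
    refine ⟨fun v => |l v|, ?_, fun v => abs_pos.mpr (hnz v)⟩
    rw [← (hPSD.dotProduct_mulVec_zero_iff (fun v => |l v|)).mp]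
    have h1 : dotProduct (fun v => |l v|) (H.mulVec (fun v => |l v|)) ≤ dotProduct l (H.mulVec l) := by
      rw [hquad, hquad]
      refine Finset.sum_le_sum fun v _ => Finset.sum_le_sum fun v' _ => ?_
      rcases eq_or_ne v v' with rfl | hne
      · simp [abs_mul_abs_self, mul_comm, mul_assoc, mul_left_comm]
      · have : l v * l v' ≤ |l v| * |l v'| := by
          calc l v * l v' ≤ |l v * l v'| := le_abs_self _
          _ = |l v| * |l v'| := abs_mul _ _
        have hH := hoff v v' hne
        nlinarith
    have h2 : dotProduct l (H.mulVec l) = 0 := by rw [hl]; simp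
    have h3 : (0:ℝ) ≤ dotProduct (fun v => |l v|) (H.mulVec (fun v => |l v|)) := by
      rw [hquad]; exact hpsd _
    have : dotProduct (star (fun v => |l v|)) (H.mulVec (fun v => |l v|)) = 0 := by
      simpa [star] using le_antisymm (h1.trans_eq h2) h3
    exact this
  · rintro ⟨l, hl, hpos⟩
    exact ⟨l, hl, fun v => (hpos v).ne'⟩
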